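/- arXiv:1502.00135 — 3 statements merged into one kernel-verified Lean document; each statement's English description precedes it below -/
import Mathlib

section
/- Let z₁, z₂ ∈ R² and r₁ ≥ r₂ > 0 with |z₂ − z₁| > r₁ + r₂ (disjoint discs). Then the measure of the set of affine lines meeting both discs B(z₁,r₁) and B(z₂,r₂) equals 2·f(r₁, r₂, |z₂ − z₁|), where f(r₁,r₂,h) = (r₁+r₂)·arcsin((r₁+r₂)/h) − (r₁−r₂)·arcsin((r₁−r₂)/h) − h·(√(1 − ((r₁−r₂)/h)²) − √(1 − ((r₁+r₂)/h)²)). -/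
open MeasureTheory Real Set

noncomputable def lineSet (α t : ℝ) : Set (EuclideanSpace ℝ (Fin 2)) :=
  {x | x 0 * Real.cos α + x 1 * Real.sin α = t}

/-- Measure of the set of lines meeting both `A` and `B`. -/
noncomputable def lineMeas₂ (A B : Set (EuclideanSpace ℝ (Fin 2))) : ENNReal :=
  ∫⁻ α in Set.Ico (0:ℝ) (2 * Real.pi), ∫⁻ t in Set.Ioi (0:ℝ),
    Set.indicator {t' : ℝ | (lineSet α t' ∩ A).Nonempty ∧ (lineSet α t' ∩ B).Nonempty}
      (fun _ => (1 : ENNReal)) t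

noncomputable def f (r₁ r₂ h : ℝ) : ℝ :=
  (r₁ + r₂) * Real.arcsin ((r₁ + r₂) / h) - (r₁ - r₂) * Real.arcsin ((r₁ - r₂) / h)
    - h * (Real.sqrt (1 - ((r₁ - r₂) / h) ^ 2) - Real.sqrt (1 - ((r₁ + r₂) / h) ^ 2))

section Aux

open intervalIntegral

lemma line_inter_ball (α t : ℝ) (z : EuclideanSpace ℝ (Fin 2)) (r : ℝ) :
    (lineSet α t ∩ Metric.closedBall z r).Nonempty ↔
      |z 0 * Real.cos α + z 1 * Real.sin α - t| ≤ r := by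
  constructor
  · rintro ⟨x, hx1, hx2⟩
    simp only [lineSet, mem_setOf_eq] at hx1
    rw [Metric.mem_closedBall, EuclideanSpace.dist_eq, Fin.sum_univ_two] at hx2
    have hd : ∀ i : Fin 2, dist (x i) (z i) = |x i - z i| := fun i => Real.dist_eq _ _
    rw [hd 0, hd 1, sq_abs, sq_abs] at hx2
    have h1 : Real.cos α ^ 2 + Real.sin α ^ 2 = 1 := Real.cos_sq_add_sin_sq α
    have key : (z 0 * Real.cos α + z 1 * Real.sin α - t)^2
        ≤ (x 0 - z 0)^2 + (x 1 - z 1)^2 := by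
      have hid : (z 0 * Real.cos α + z 1 * Real.sin α - t)^2
          = ((z 0 - x 0) * Real.cos α + (z 1 - x 1) * Real.sin α)^2 := by rw [← hx1]; ring
      have hid2 : ((z 0 - x 0) * Real.cos α + (z 1 - x 1) * Real.sin α)^2
          = ((z 0 - x 0)^2 + (z 1 - x 1)^2) * (Real.cos α ^ 2 + Real.sin α ^ 2)
            - ((z 0 - x 0) * Real.sin α - (z 1 - x 1) * Real.cos α)^2 := by ring
      rw [hid, hid2, h1, mul_one]
      nlinarith [sq_nonneg ((z 0 - x 0) * Real.sin α - (z 1 - x 1) * Real.cos α)]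
    calc |z 0 * Real.cos α + z 1 * Real.sin α - t|
        = Real.sqrt ((z 0 * Real.cos α + z 1 * Real.sin α - t)^2) := (Real.sqrt_sq_eq_abs _).symm
      _ ≤ Real.sqrt ((x 0 - z 0)^2 + (x 1 - z 1)^2) := Real.sqrt_le_sqrt key
      _ ≤ r := hx2
  · intro h
    set c : ℝ := z 0 * Real.cos α + z 1 * Real.sin α - t with hc
    have h1 : Real.cos α ^ 2 + Real.sin α ^ 2 = 1 := Real.cos_sq_add_sin_sq α
    refine ⟨(WithLp.equiv 2 (∀ _ : Fin 2, ℝ)).symm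
      ![z 0 - c * Real.cos α, z 1 - c * Real.sin α], ?_, ?_⟩
    · simp only [lineSet, mem_setOf_eq, WithLp.equiv_symm_apply, PiLp.toLp_apply]
      simp only [Matrix.cons_val_zero, Matrix.cons_val_one, Matrix.head_cons]
      simp only [hc]
      linear_combination (-(z 0 * Real.cos α + z 1 * Real.sin α - t)) * h1
    · rw [Metric.mem_closedBall, EuclideanSpace.dist_eq, Fin.sum_univ_two]
      simp only [WithLp.equiv_symm_apply, PiLp.toLp_apply, Matrix.cons_val_zero, Matrix.cons_val_one,
        Matrix.head_cons, Real.dist_eq]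
      have e1 : |z 0 - c * Real.cos α - z 0| ^ 2 + |z 1 - c * Real.sin α - z 1| ^ 2 = c ^ 2 := by
        rw [sq_abs, sq_abs]
        have : (z 0 - c * Real.cos α - z 0) ^ 2 + (z 1 - c * Real.sin α - z 1) ^ 2
            = c^2 * (Real.cos α ^ 2 + Real.sin α ^ 2) := by ring
        rw [this, h1, mul_one]
      rw [e1, Real.sqrt_sq_eq_abs]
      exact h

lemma volume_Icc_inter_Ioi (A B : ℝ) :
    volume (Icc A B ∩ Ioi 0) = ENNReal.ofReal (B - max A 0) := by
  rcases le_or_gt A 0 with h | h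
  · have : Icc A B ∩ Ioi 0 = Ioc 0 B := by
      ext t
      simp only [mem_inter_iff, mem_Icc, mem_Ioi, mem_Ioc]
      constructor
      · rintro ⟨⟨h1, h2⟩, h3⟩; exact ⟨h3, h2⟩
      · rintro ⟨h1, h2⟩; exact ⟨⟨by linarith, h2⟩, h1⟩
    rw [this, Real.volume_Ioc, max_eq_right h, sub_zero]
  · have : Icc A B ∩ Ioi 0 = Icc A B := by
      apply inter_eq_self_of_subset_left
      intro t ht
      exact lt_of_lt_of_le h ht.1
    rw [this, Real.volume_Icc, max_eq_left h.le]

lemma lintegral_indicator_Ioi (S : Set ℝ) (hS : MeasurableSet S) :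
    (∫⁻ t in Ioi (0:ℝ), S.indicator (fun _ => (1 : ENNReal)) t)
      = volume (S ∩ Ioi 0) := by
  rw [lintegral_indicator hS, setLIntegral_one, Measure.restrict_apply hS]

lemma pairing_identity (A B : ℝ) :
    max (B - max A 0) 0 + max (-A - max (-B) 0) 0 = max (B - A) 0 := by
  rcases le_total A 0 with h | h <;> rcases le_total B 0 with h' | h' <;>
    simp [max_def] <;> split_ifs <;> linarith

lemma length_identity (a b r₁ r₂ : ℝ) (h₁₂ : r₂ ≤ r₁) :
    min (a + r₁) (b + r₂) - max (a - r₁) (b - r₂)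
      = min (2 * r₂) (r₁ + r₂ - |b - a|) := by
  rcases abs_cases (b - a) with ⟨he, hs⟩ | ⟨he, hs⟩ <;>
    rcases le_total (a + r₁) (b + r₂) with h | h <;>
    rcases le_total (a - r₁) (b - r₂) with h' | h' <;>
    rw [he] <;>
    simp [min_def, max_def] <;> split_ifs <;> linarith

lemma Gp_pair (a b r₁ r₂ : ℝ) (h₁₂ : r₂ ≤ r₁) :
    max (min (a + r₁) (b + r₂) - max (max (a - r₁) (b - r₂)) 0) 0
      + max (min (-a + r₁) (-b + r₂) - max (max (-a - r₁) (-b - r₂)) 0) 0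
      = max (min (2 * r₂) (r₁ + r₂ - |b - a|)) 0 := by
  have e1 : min (-a + r₁) (-b + r₂) = -(max (a - r₁) (b - r₂)) := by
    rw [← min_neg_neg]; congr 1 <;> ring
  have e2 : max (-a - r₁) (-b - r₂) = -(min (a + r₁) (b + r₂)) := by
    rw [← max_neg_neg]; congr 1 <;> ring
  rw [e1, e2, ← length_identity a b r₁ r₂ h₁₂]
  exact pairing_identity _ _

lemma contF (r₁ r₂ h : ℝ) :
    Continuous (fun β : ℝ => max (min (2 * r₂) (r₁ + r₂ - |h * Real.cos β|)) 0) := by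
  fun_prop

lemma trig_integral (r₁ r₂ h : ℝ) (h₂ : 0 < r₂) (h₁₂ : r₂ ≤ r₁) (hh : r₁ + r₂ < h) :
    (∫ β in (0:ℝ)..(π/2), max (min (2 * r₂) (r₁ + r₂ - |h * Real.cos β|)) 0)
      = f r₁ r₂ h := by
  have hhpos : 0 < h := lt_trans (by linarith) hh
  set F : ℝ → ℝ := fun β => max (min (2 * r₂) (r₁ + r₂ - |h * Real.cos β|)) 0 with hF
  set sp : ℝ := (r₁ + r₂) / h with hsp
  set sm : ℝ := (r₁ - r₂) / h with hsm
  have hsp0 : 0 < sp := div_pos (by linarith) hhpos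
  have hsp1 : sp < 1 := (div_lt_one hhpos).mpr hh
  have hsm0 : 0 ≤ sm := div_nonneg (by linarith) hhpos.le
  have hsmsp : sm ≤ sp := by
    rw [hsm, hsp]
    exact (div_le_div_iff_of_pos_right hhpos).mpr (by linarith)
  have hmsp : h * sp = r₁ + r₂ := by rw [hsp]; field_simp
  have hmsm : h * sm = r₁ - r₂ := by rw [hsm]; field_simp
  set α₁ : ℝ := Real.arccos sp with hα₁
  set α₂ : ℝ := Real.arccos sm with hα₂
  have h0α₁ : 0 ≤ α₁ := Real.arccos_nonneg _
  have hα₂pi2 : α₂ ≤ π / 2 := Real.arccos_le_pi_div_two.mpr hsm0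
  have hα₁α₂ : α₁ ≤ α₂ := by
    rw [hα₁, hα₂, Real.arccos_eq_pi_div_two_sub_arcsin, Real.arccos_eq_pi_div_two_sub_arcsin]
    have := Real.monotone_arcsin hsmsp
    linarith
  have hα₁pi : α₁ ≤ π := Real.arccos_le_pi _
  have hα₂pi : α₂ ≤ π := Real.arccos_le_pi _
  have hcosα₁ : Real.cos α₁ = sp := Real.cos_arccos (by linarith) hsp1.le
  have hcosα₂ : Real.cos α₂ = sm := Real.cos_arccos (by linarith) (hsmsp.trans hsp1.le)
  have hint : ∀ a b : ℝ, IntervalIntegrable F volume a b :=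
    fun a b => (contF r₁ r₂ h).intervalIntegrable a b
  have hsplit : (∫ β in (0:ℝ)..(π/2), F β)
      = (∫ β in (0:ℝ)..α₁, F β) + (∫ β in α₁..α₂, F β) + (∫ β in α₂..(π/2), F β) := by
    rw [integral_add_adjacent_intervals (hint 0 α₁) (hint α₁ α₂),
      integral_add_adjacent_intervals (hint 0 α₂) (hint α₂ (π/2))]
  have p1 : (∫ β in (0:ℝ)..α₁, F β) = 0 := by
    rw [integral_congr (g := fun _ => (0:ℝ))]
    · simp
    · intro β hβ
      rw [uIcc_of_le h0α₁] at hβ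
      have hc : sp ≤ Real.cos β := hcosα₁ ▸ Real.cos_le_cos_of_nonneg_of_le_pi hβ.1 hα₁pi hβ.2
      have hc0 : 0 ≤ h * Real.cos β := by nlinarith
      have hge : r₁ + r₂ ≤ h * Real.cos β := by
        calc r₁ + r₂ = h * sp := hmsp.symm
          _ ≤ h * Real.cos β := by nlinarith
      simp only [hF, abs_of_nonneg hc0]
      exact max_eq_right ((min_le_right _ _).trans (by linarith))
  have p2 : (∫ β in α₁..α₂, F β)
      = (r₁ + r₂) * (α₂ - α₁) - h * (Real.sin α₂ - Real.sin α₁) := by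
    rw [integral_congr (g := fun β => r₁ + r₂ - h * Real.cos β)]
    · rw [integral_sub (intervalIntegrable_const)
        (Continuous.intervalIntegrable (by fun_prop : Continuous fun x : ℝ => h * Real.cos x) _ _),
        intervalIntegral.integral_const, intervalIntegral.integral_const_mul, integral_cos, smul_eq_mul]
      ring
    · intro β hβ
      rw [uIcc_of_le hα₁α₂] at hβ
      have hβ0 : 0 ≤ β := h0α₁.trans hβ.1
      have hβpi : β ≤ π := hβ.2.trans (by linarith [Real.pi_pos])
      have hcu : Real.cos β ≤ sp := hcosα₁ ▸ Real.cos_le_cos_of_nonneg_of_le_pi h0α₁ hβpi hβ.1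
      have hcl : sm ≤ Real.cos β := hcosα₂ ▸ Real.cos_le_cos_of_nonneg_of_le_pi hβ0 hα₂pi hβ.2
      have hc0 : 0 ≤ h * Real.cos β := by nlinarith
      have h1 : h * Real.cos β ≤ r₁ + r₂ := by rw [← hmsp]; nlinarith
      have h2 : r₁ - r₂ ≤ h * Real.cos β := by rw [← hmsm]; nlinarith
      simp only [hF, abs_of_nonneg hc0]
      rw [min_eq_right (by linarith), max_eq_left (by linarith)]
  have p3 : (∫ β in α₂..(π/2), F β) = (π / 2 - α₂) * (2 * r₂) := by
    rw [integral_congr (g := fun _ => 2 * r₂)]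
    · rw [intervalIntegral.integral_const, smul_eq_mul]
    · intro β hβ
      rw [uIcc_of_le hα₂pi2] at hβ
      have h0α₂ : 0 ≤ α₂ := Real.arccos_nonneg _
      have hβpi : β ≤ π := hβ.2.trans (by linarith [Real.pi_pos])
      have hc0 : 0 ≤ Real.cos β :=
        Real.cos_nonneg_of_mem_Icc ⟨by linarith [h0α₂.trans hβ.1, Real.pi_pos], hβ.2⟩
      have hcu : Real.cos β ≤ sm := hcosα₂ ▸ Real.cos_le_cos_of_nonneg_of_le_pi h0α₂ hβpi hβ.1
      have h2 : h * Real.cos β ≤ r₁ - r₂ := by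
        rw [← hmsm]; exact mul_le_mul_of_nonneg_left hcu hhpos.le
      have habs : (0:ℝ) ≤ h * Real.cos β := mul_nonneg hhpos.le hc0
      simp only [hF, abs_of_nonneg habs]
      rw [min_eq_left (by linarith), max_eq_left (by linarith)]
  rw [hsplit, p1, p2, p3]
  have hsin1 : Real.sin α₁ = Real.sqrt (1 - sp ^ 2) := Real.sin_arccos sp
  have hsin2 : Real.sin α₂ = Real.sqrt (1 - sm ^ 2) := Real.sin_arccos sm
  have he1 : α₁ = π / 2 - Real.arcsin sp := Real.arccos_eq_pi_div_two_sub_arcsin sp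
  have he2 : α₂ = π / 2 - Real.arcsin sm := Real.arccos_eq_pi_div_two_sub_arcsin sm
  rw [hsin1, hsin2, he1, he2, f, ← hsp, ← hsm]
  ring

lemma ofReal_max_zero (x : ℝ) : ENNReal.ofReal (max x 0) = ENNReal.ofReal x := by
  rcases le_total x 0 with h | h
  · rw [max_eq_right h, ENNReal.ofReal_zero, ENNReal.ofReal_of_nonpos h]
  · rw [max_eq_left h]

lemma polar (w0 w1 h : ℝ) (hh : 0 < h) (hn : Real.sqrt (w0 ^ 2 + w1 ^ 2) = h) :
    ∃ θ : ℝ, w0 = h * Real.cos θ ∧ w1 = h * Real.sin θ := by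
  set w : ℂ := w0 + w1 * Complex.I with hw
  have habs : ‖w‖ = h := by
    rw [Complex.norm_def, hw, Complex.normSq_add_mul_I]
    exact hn
  have hw0 : w ≠ 0 := by
    intro h0
    rw [h0, norm_zero] at habs
    exact hh.ne habs
  refine ⟨w.arg, ?_, ?_⟩
  · have := Complex.cos_arg hw0
    rw [habs] at this
    have hre : w.re = w0 := by simp [hw]
    rw [hre] at this
    field_simp [hh.ne'] at this ⊢
    linarith [this]
  · have := Complex.sin_arg w
    rw [habs] at this
    have him : w.im = w1 := by simp [hw]
    rw [him] at this
    field_simp [hh.ne'] at this ⊢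
    linarith [this]

end Aux

section Main

open intervalIntegral

/-- The measure of the set of lines meeting two disjoint discs `B(z₁,r₁)` and `B(z₂,r₂)`
equals `2 f(r₁, r₂, |z₂ − z₁|)`. -/
theorem lineMeas₂_two_discs (z₁ z₂ : EuclideanSpace ℝ (Fin 2)) (r₁ r₂ : ℝ)
    (h₂ : 0 < r₂) (h₁₂ : r₂ ≤ r₁) (hdist : r₁ + r₂ < dist z₂ z₁) :
    lineMeas₂ (Metric.closedBall z₁ r₁) (Metric.closedBall z₂ r₂)
      = ENNReal.ofReal (2 * f r₁ r₂ (dist z₂ z₁)) := by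
  have hr₁ : 0 < r₁ := lt_of_lt_of_le h₂ h₁₂
  set h : ℝ := dist z₂ z₁ with hh
  have hhpos : 0 < h := by linarith
  set a : ℝ → ℝ := fun α => z₁ 0 * Real.cos α + z₁ 1 * Real.sin α with ha
  set b : ℝ → ℝ := fun α => z₂ 0 * Real.cos α + z₂ 1 * Real.sin α with hb
  set Gp : ℝ → ℝ := fun α =>
    max (min (a α + r₁) (b α + r₂) - max (max (a α - r₁) (b α - r₂)) 0) 0 with hGpdef
  have hGpc : Continuous Gp := by
    rw [hGpdef, ha, hb]; fun_prop
  -- Step A: reduce to a single lintegral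
  have stepA : lineMeas₂ (Metric.closedBall z₁ r₁) (Metric.closedBall z₂ r₂)
      = ∫⁻ α in Ico (0:ℝ) (2 * π), ENNReal.ofReal (Gp α) := by
    unfold lineMeas₂
    apply lintegral_congr
    intro α
    have hset : {t' : ℝ | (lineSet α t' ∩ Metric.closedBall z₁ r₁).Nonempty ∧
          (lineSet α t' ∩ Metric.closedBall z₂ r₂).Nonempty}
        = Icc (max (a α - r₁) (b α - r₂)) (min (a α + r₁) (b α + r₂)) := by
      ext t
      simp only [mem_setOf_eq, line_inter_ball, mem_Icc, max_le_iff, le_min_iff, abs_le,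
        neg_le_sub_iff_le_add, sub_le_iff_le_add, ha, hb]
      constructor
      · rintro ⟨⟨h1, h2⟩, h3, h4⟩
        refine ⟨⟨by linarith, by linarith⟩, by linarith, by linarith⟩
      · rintro ⟨⟨h1, h2⟩, h3, h4⟩
        refine ⟨⟨by linarith, by linarith⟩, by linarith, by linarith⟩
    rw [hset, lintegral_indicator_Ioi _ measurableSet_Icc, volume_Icc_inter_Ioi,
      hGpdef, ofReal_max_zero]
  -- Step B: convert to a Bochner interval integral
  have stepB : (∫⁻ α in Ico (0:ℝ) (2 * π), ENNReal.ofReal (Gp α))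
      = ENNReal.ofReal (∫ α in (0:ℝ)..(2 * π), Gp α) := by
    rw [← MeasureTheory.ofReal_integral_eq_lintegral_ofReal]
    · congr 1
      rw [MeasureTheory.integral_Ico_eq_integral_Ioo,
        intervalIntegral.integral_of_le (by positivity : (0:ℝ) ≤ 2 * π),
        MeasureTheory.integral_Ioc_eq_integral_Ioo]
    · exact (hGpc.integrableOn_Icc).mono_set Ico_subset_Icc_self
    · exact Filter.Eventually.of_forall (fun α => le_max_right _ _)
  -- Step C: fold [0, 2π] to [0, π]
  have hGpInt : ∀ c d : ℝ, IntervalIntegrable Gp volume c d :=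
    fun c d => hGpc.intervalIntegrable c d
  have hGpSInt : ∀ c d : ℝ, IntervalIntegrable (fun α => Gp (α + π)) volume c d :=
    fun c d => (hGpc.comp (continuous_id.add continuous_const)).intervalIntegrable c d
  have stepC : (∫ α in (0:ℝ)..(2 * π), Gp α)
      = ∫ α in (0:ℝ)..π, (Gp α + Gp (α + π)) := by
    have h1 : (∫ α in (0:ℝ)..(2 * π), Gp α)
        = (∫ α in (0:ℝ)..π, Gp α) + ∫ α in π..(2 * π), Gp α :=
      (integral_add_adjacent_intervals (hGpInt 0 π) (hGpInt π (2 * π))).symm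
    have h2 : (∫ α in π..(2 * π), Gp α) = ∫ α in (0:ℝ)..π, Gp (α + π) := by
      rw [intervalIntegral.integral_comp_add_right Gp π, zero_add]
      norm_num [two_mul]
    rw [h1, h2, ← intervalIntegral.integral_add (hGpInt 0 π) (hGpSInt 0 π)]
  -- Step D: pointwise pairing
  obtain ⟨θ, hw0, hw1⟩ : ∃ θ : ℝ, z₂ 0 - z₁ 0 = h * Real.cos θ ∧ z₂ 1 - z₁ 1 = h * Real.sin θ := by
    apply polar _ _ _ hhpos
    rw [hh, EuclideanSpace.dist_eq, Fin.sum_univ_two, Real.dist_eq, Real.dist_eq,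
      sq_abs, sq_abs]
  have stepD : ∀ α : ℝ, Gp α + Gp (α + π)
      = max (min (2 * r₂) (r₁ + r₂ - |h * Real.cos (α - θ)|)) 0 := by
    intro α
    have hba : b α - a α = h * Real.cos (α - θ) := by
      simp only [hb, ha]
      rw [Real.cos_sub]
      have e : z₂ 0 * Real.cos α + z₂ 1 * Real.sin α - (z₁ 0 * Real.cos α + z₁ 1 * Real.sin α)
          = (z₂ 0 - z₁ 0) * Real.cos α + (z₂ 1 - z₁ 1) * Real.sin α := by ring
      rw [e, hw0, hw1]
      ring
    have hshift : Gp (α + π) = max (min (-(a α) + r₁) (-(b α) + r₂)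
        - max (max (-(a α) - r₁) (-(b α) - r₂)) 0) 0 := by
      simp only [hGpdef, ha, hb, Real.cos_add_pi, Real.sin_add_pi]
      ring_nf
    rw [hshift, ← hba]
    simpa only [hGpdef] using Gp_pair (a α) (b α) r₁ r₂ h₁₂
  -- Step E: shift by θ using periodicity and symmetry
  set F : ℝ → ℝ := fun x => max (min (2 * r₂) (r₁ + r₂ - |h * Real.cos x|)) 0 with hFdef
  have hFc : Continuous F := contF r₁ r₂ h
  have hFper : Function.Periodic F π := by
    intro x
    simp only [hFdef, Real.cos_add_pi, mul_neg, abs_neg]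
  have stepE : (∫ α in (0:ℝ)..π, (Gp α + Gp (α + π))) = ∫ x in (0:ℝ)..π, F x := by
    have h1 : (∫ α in (0:ℝ)..π, (Gp α + Gp (α + π))) = ∫ α in (0:ℝ)..π, F (α - θ) := by
      apply intervalIntegral.integral_congr
      intro α _
      exact stepD α
    have h2 : (∫ α in (0:ℝ)..π, F (α - θ)) = ∫ x in (-θ)..(π - θ), F x := by
      have := intervalIntegral.integral_comp_sub_right (a := (0:ℝ)) (b := π) F θ
      rw [this, zero_sub]
    have h3 : (∫ x in (-θ)..(π - θ), F x) = ∫ x in (0:ℝ)..π, F x := by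
      have := hFper.intervalIntegral_add_eq (-θ) 0
      rw [zero_add] at this
      rw [show π - θ = -θ + π by ring]
      exact this
    rw [h1, h2, h3]
  -- Step F: fold [0, π] to [0, π/2]
  have stepF : (∫ x in (0:ℝ)..π, F x) = 2 * ∫ x in (0:ℝ)..(π/2), F x := by
    have h1 : (∫ x in (0:ℝ)..π, F x)
        = (∫ x in (0:ℝ)..(π/2), F x) + ∫ x in (π/2)..π, F x :=
      (integral_add_adjacent_intervals (hFc.intervalIntegrable _ _)
        (hFc.intervalIntegrable _ _)).symm
    have h2 : (∫ x in (π/2)..π, F x) = ∫ x in (0:ℝ)..(π/2), F x := by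
      have hc : (∫ x in (0:ℝ)..(π/2), F (π - x)) = ∫ x in (π - π/2)..(π - 0), F x :=
        intervalIntegral.integral_comp_sub_left F π
      have he : ∀ x : ℝ, F (π - x) = F x := by
        intro x
        simp only [hFdef, Real.cos_pi_sub, mul_neg, abs_neg]
      simp only [he] at hc
      rw [hc, show π - π/2 = π/2 by ring, show π - (0:ℝ) = π by ring]
    rw [h1, h2]
    ring
  -- Conclusion
  rw [stepA, stepB, stepC, stepE, stepF, trig_integral r₁ r₂ h h₂ h₁₂ (by rw [hh] at hdist ⊢; exact hdist)]

end Main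
end

section
/- For fixed r₁ ≥ r₂ > 0, the function h ↦ f(r₁,r₂,h) defined for h > r₁ + r₂ by f(r₁,r₂,h) = (r₁+r₂)·arcsin((r₁+r₂)/h) − (r₁−r₂)·arcsin((r₁−r₂)/h) − h·(√(1 − ((r₁−r₂)/h)²) − √(1 − ((r₁+r₂)/h)²)) is positive, strictly decreasing, and tends to 0 as h → ∞. -/
open Real Set Filter

lemma hasDeriv_aux (h t : ℝ) (ht0 : 0 ≤ t) (hth : t < h) :
    HasDerivAt (fun t : ℝ => t * Real.arcsin (t / h) + h * Real.sqrt (1 - (t / h) ^ 2))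
      (Real.arcsin (t / h)) t := by
  have hh : 0 < h := lt_of_le_of_lt ht0 hth
  have hx0 : 0 ≤ t / h := div_nonneg ht0 hh.le
  have hx1 : t / h < 1 := (div_lt_one hh).2 hth
  have hu : (0:ℝ) < 1 - (t / h) ^ 2 := by nlinarith
  have hsq : Real.sqrt (1 - (t / h) ^ 2) ≠ 0 := by positivity
  have hd1 : HasDerivAt (fun t : ℝ => t / h) (1 / h) t := by
    simpa using (hasDerivAt_id t).div_const h
  have harc : HasDerivAt (fun t : ℝ => Real.arcsin (t / h))
      (1 / Real.sqrt (1 - (t / h) ^ 2) * (1 / h)) t :=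
    (Real.hasDerivAt_arcsin (by nlinarith) (by nlinarith)).comp t hd1
  have hmul : HasDerivAt (fun t : ℝ => t * Real.arcsin (t / h))
      (1 * Real.arcsin (t / h) + t * (1 / Real.sqrt (1 - (t / h) ^ 2) * (1 / h))) t :=
    (hasDerivAt_id t).mul harc
  have hinner : HasDerivAt (fun t : ℝ => 1 - (t / h) ^ 2) (-(2 * (t / h) * (1 / h))) t := by
    simpa using ((hd1.pow 2)).const_sub 1
  have hsqrt : HasDerivAt (fun t : ℝ => Real.sqrt (1 - (t / h) ^ 2))
      (1 / (2 * Real.sqrt (1 - (t / h) ^ 2)) * -(2 * (t / h) * (1 / h))) t :=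
    (Real.hasDerivAt_sqrt hu.ne').comp t hinner
  have : HasDerivAt (fun t : ℝ => t * Real.arcsin (t / h) + h * Real.sqrt (1 - (t / h) ^ 2)) _ t :=
    hmul.add (hsqrt.const_mul h)
  convert this using 1
  have hs : Real.sqrt (h ^ 2 - t ^ 2) ≠ 0 := by
    have h1 : (0:ℝ) < h ^ 2 - t ^ 2 := by nlinarith
    positivity
  field_simp [hh.ne', hs]
  ring

lemma f_eq_integral (a b h : ℝ) (hb : 0 ≤ b) (hba : b ≤ a) (hh : a < h) :
    a * Real.arcsin (a / h) - b * Real.arcsin (b / h)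
      - h * (Real.sqrt (1 - (b / h) ^ 2) - Real.sqrt (1 - (a / h) ^ 2))
      = ∫ t in b..a, Real.arcsin (t / h) := by
  have key : ∫ t in b..a, Real.arcsin (t / h)
      = (a * Real.arcsin (a / h) + h * Real.sqrt (1 - (a / h) ^ 2))
        - (b * Real.arcsin (b / h) + h * Real.sqrt (1 - (b / h) ^ 2)) := by
    apply intervalIntegral.integral_eq_sub_of_hasDerivAt
    · intro t ht
      rw [Set.uIcc_of_le hba] at ht
      exact hasDeriv_aux h t (hb.trans ht.1) (lt_of_le_of_lt ht.2 hh)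
    · exact (Real.continuous_arcsin.comp (continuous_id.div_const h)).intervalIntegrable b a
  rw [key]; ring

/-- For fixed `r₁ ≥ r₂ > 0`, the function `h ↦ f(r₁,r₂,h)` on `(r₁+r₂, ∞)` is
positive, strictly decreasing, and tends to `0` as `h → ∞`. -/
theorem f_pos_strictAnti_tendsto_zero (r₁ r₂ : ℝ) (h₂ : 0 < r₂) (h₁₂ : r₂ ≤ r₁) :
    (∀ h ∈ Set.Ioi (r₁ + r₂), 0 < f r₁ r₂ h) ∧
    StrictAntiOn (fun h => f r₁ r₂ h) (Set.Ioi (r₁ + r₂)) ∧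
    Tendsto (fun h => f r₁ r₂ h) atTop (nhds 0) := by
  have hb : (0:ℝ) ≤ r₁ - r₂ := by linarith
  have hba : r₁ - r₂ < r₁ + r₂ := by linarith
  have ha0 : (0:ℝ) < r₁ + r₂ := by linarith
  have hint : ∀ g : ℝ, IntervalIntegrable (fun t => Real.arcsin (t / g)) MeasureTheory.volume
      (r₁ - r₂) (r₁ + r₂) := fun g =>
    (Real.continuous_arcsin.comp (continuous_id.div_const g)).intervalIntegrable _ _
  have hfeq : ∀ h ∈ Set.Ioi (r₁ + r₂),
      f r₁ r₂ h = ∫ t in (r₁ - r₂)..(r₁ + r₂), Real.arcsin (t / h) := fun h hh =>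
    f_eq_integral (r₁ + r₂) (r₁ - r₂) h hb hba.le hh
  have hpos : ∀ h ∈ Set.Ioi (r₁ + r₂), 0 < f r₁ r₂ h := by
    intro h hh
    have h0 : 0 < h := ha0.trans hh
    rw [hfeq h hh]
    apply intervalIntegral.intervalIntegral_pos_of_pos_on (hint h)
    · intro t ht
      have ht0 : 0 < t := lt_of_le_of_lt hb ht.1
      exact Real.arcsin_pos.2 (by positivity)
    · exact hba
  refine ⟨hpos, ?_, ?_⟩
  · intro x hx y hy hxy
    have hx0 : 0 < x := ha0.trans hx
    simp only
    rw [hfeq y hy, hfeq x hx, ← sub_pos, ← intervalIntegral.integral_sub (hint x) (hint y)]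
    apply intervalIntegral.intervalIntegral_pos_of_pos_on
    · exact ((hint x).sub (hint y))
    · intro t ht
      have ht0 : 0 < t := lt_of_le_of_lt hb ht.1
      have hlt : t / y < t / x := div_lt_div_of_pos_left ht0 hx0 hxy
      have hy0 : 0 < y := hx0.trans hxy
      have h1 : t / y ∈ Set.Icc (-1:ℝ) 1 := by
        constructor
        · have : 0 ≤ t / y := div_nonneg ht0.le hy0.le
          linarith
        · rw [div_le_one (hx0.trans hxy)]
          exact le_of_lt (lt_trans ht.2 (hx.trans hxy))
      have h2 : t / x ∈ Set.Icc (-1:ℝ) 1 := by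
        constructor
        · have : 0 ≤ t / x := by positivity
          linarith
        · rw [div_le_one hx0]
          exact le_of_lt (lt_trans ht.2 hx)
      have := Real.strictMonoOn_arcsin h1 h2 hlt
      linarith
    · exact hba
  · have hnonneg : ∀ᶠ h in atTop, 0 ≤ f r₁ r₂ h := by
      filter_upwards [eventually_gt_atTop (r₁ + r₂)] with h hh
      exact (hpos h hh).le
    have hupper : ∀ᶠ h in atTop, f r₁ r₂ h ≤ 2 * r₂ * Real.arcsin ((r₁ + r₂) / h) := by
      filter_upwards [eventually_gt_atTop (r₁ + r₂)] with h hh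
      have h0 : 0 < h := ha0.trans hh
      rw [hfeq h hh]
      calc ∫ t in (r₁ - r₂)..(r₁ + r₂), Real.arcsin (t / h)
          ≤ ∫ _ in (r₁ - r₂)..(r₁ + r₂), Real.arcsin ((r₁ + r₂) / h) := by
            apply intervalIntegral.integral_mono_on hba.le (hint h)
              (intervalIntegrable_const)
            intro t ht
            exact Real.monotone_arcsin (by gcongr; exact ht.2)
        _ = 2 * r₂ * Real.arcsin ((r₁ + r₂) / h) := by
            rw [intervalIntegral.integral_const]
            simp only [smul_eq_mul]
            ring
    have htend : Tendsto (fun h => 2 * r₂ * Real.arcsin ((r₁ + r₂) / h)) atTop (nhds 0) := by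
      have h1 : Tendsto (fun h : ℝ => (r₁ + r₂) / h) atTop (nhds 0) :=
        tendsto_const_nhds.div_atTop tendsto_id
      have h2 := (Real.continuous_arcsin.tendsto 0).comp h1
      rw [Real.arcsin_zero] at h2
      simpa using h2.const_mul (2 * r₂)
    exact squeeze_zero' hnonneg hupper htend
end

section
/- Let v > 0, ε > 0, and let z₁, z₂ ∈ R² and radii r₁, r₂ with (1+ε)v ≥ r₁ ≥ r₂ > v and |z₂ − z₁| > r₁ + r₂. Then the measure of the set of affine lines meeting both discs B(z₁,r₁) and B(z₂,r₂) is at most 2π r₂ − (4 − επ) v. -/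
open MeasureTheory Real Set

lemma line_meets_ball (α t r : ℝ) (hr : 0 ≤ r) (z : EuclideanSpace ℝ (Fin 2)) :
    (lineSet α t ∩ Metric.closedBall z r).Nonempty ↔
      |z 0 * Real.cos α + z 1 * Real.sin α - t| ≤ r := by
  constructor
  · rintro ⟨x, hx1, hx2⟩
    have hx1' : x 0 * Real.cos α + x 1 * Real.sin α = t := hx1
    rw [Metric.mem_closedBall, EuclideanSpace.dist_eq] at hx2
    simp only [Fin.sum_univ_two] at hx2
    have h0 : (0:ℝ) ≤ (x 0 - z 0)^2 + (x 1 - z 1)^2 := by positivity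
    simp only [Real.dist_eq, sq_abs] at hx2
    have hsq : (x 0 - z 0)^2 + (x 1 - z 1)^2 ≤ r^2 := by
      have h1 := Real.sq_sqrt h0
      nlinarith [Real.sqrt_nonneg ((x 0 - z 0)^2 + (x 1 - z 1)^2)]
    have hpyth := Real.sin_sq_add_cos_sq α
    have kid : (z 0 * Real.cos α + z 1 * Real.sin α - t)^2
        + ((z 0 - x 0)*Real.sin α - (z 1 - x 1)*Real.cos α)^2
        = ((x 0 - z 0)^2 + (x 1 - z 1)^2) := by
      rw [← hx1']
      linear_combination ((x 0 - z 0)^2 + (x 1 - z 1)^2) * hpyth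
    have key : (z 0 * Real.cos α + z 1 * Real.sin α - t)^2 ≤ r^2 := by
      nlinarith [sq_nonneg ((z 0 - x 0)*Real.sin α - (z 1 - x 1)*Real.cos α)]
    calc |z 0 * Real.cos α + z 1 * Real.sin α - t|
        = Real.sqrt ((z 0 * Real.cos α + z 1 * Real.sin α - t)^2) := (Real.sqrt_sq_eq_abs _).symm
      _ ≤ Real.sqrt (r^2) := Real.sqrt_le_sqrt key
      _ = r := Real.sqrt_sq hr
  · intro h
    set c := z 0 * Real.cos α + z 1 * Real.sin α with hc
    refine ⟨(WithLp.equiv 2 (Fin 2 → ℝ)).symm ![z 0 - (c - t) * Real.cos α, z 1 - (c - t) * Real.sin α], ?_, ?_⟩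
    · show (z 0 - (c - t) * Real.cos α) * Real.cos α + (z 1 - (c - t) * Real.sin α) * Real.sin α = t
      linear_combination (t - c) * Real.sin_sq_add_cos_sq α
    · rw [Metric.mem_closedBall, EuclideanSpace.dist_eq]
      simp only [Fin.sum_univ_two, WithLp.equiv_symm_apply, PiLp.toLp_apply, Matrix.cons_val_zero, Matrix.cons_val_one, Matrix.head_cons, Real.dist_eq, sq_abs]
      rw [show (z 0 - (c - t) * Real.cos α - z 0)^2 + (z 1 - (c - t) * Real.sin α - z 1)^2 = (c - t)^2 from by
        linear_combination (c - t)^2 * Real.sin_sq_add_cos_sq α]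
      rw [Real.sqrt_sq_eq_abs]
      exact h

set_option maxHeartbeats 1000000 in
/-- If `(1+ε)v ≥ r₁ ≥ r₂ > v` and the two discs are disjoint, then the measure of lines
meeting both discs is at most `2π r₂ − (4 − επ) v`. -/
theorem lineMeas₂_le (v ε : ℝ) (hv : 0 < v) (hε : 0 < ε)
    (z₁ z₂ : EuclideanSpace ℝ (Fin 2)) (r₁ r₂ : ℝ)
    (h₂ : v < r₂) (h₁₂ : r₂ ≤ r₁) (h₁ : r₁ ≤ (1 + ε) * v)
    (hdist : r₁ + r₂ < dist z₂ z₁) :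
    lineMeas₂ (Metric.closedBall z₁ r₁) (Metric.closedBall z₂ r₂)
      ≤ ENNReal.ofReal (2 * Real.pi * r₂ - (4 - ε * Real.pi) * v) := by
  have hr₂ : 0 < r₂ := hv.trans h₂
  have hr₁ : 0 < r₁ := lt_of_lt_of_le hr₂ h₁₂
  set d := dist z₂ z₁ with hd
  have hdpos : 0 < d := by linarith
  have hdsq : d^2 = (z₂ 0 - z₁ 0)^2 + (z₂ 1 - z₁ 1)^2 := by
    rw [hd, EuclideanSpace.dist_eq]
    simp only [Fin.sum_univ_two, Real.dist_eq, sq_abs]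
    rw [Real.sq_sqrt (by positivity)]
  set e₀ := (z₂ 0 - z₁ 0) / d with he₀
  set e₁ := (z₂ 1 - z₁ 1) / d with he₁
  have he : e₀^2 + e₁^2 = 1 := by
    rw [he₀, he₁]
    field_simp
    linarith [hdsq]
  set c₁ : ℝ → ℝ := fun α => z₁ 0 * Real.cos α + z₁ 1 * Real.sin α with hc₁
  set c₂ : ℝ → ℝ := fun α => z₂ 0 * Real.cos α + z₂ 1 * Real.sin α with hc₂
  set A : ℝ → ℝ := fun α => max (c₁ α - r₁) (c₂ α - r₂) with hA
  set B : ℝ → ℝ := fun α => min (c₁ α + r₁) (c₂ α + r₂) with hB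
  set k : ℝ → ℝ := fun α => e₀ * Real.cos α + e₁ * Real.sin α with hk
  set g : ℝ → ENNReal := fun α => ENNReal.ofReal (B α - max (A α) 0) with hg
  -- inner integral formula
  have hinner : ∀ α : ℝ, (∫⁻ t in Set.Ioi (0:ℝ),
      Set.indicator {t' : ℝ | (lineSet α t' ∩ Metric.closedBall z₁ r₁).Nonempty ∧
          (lineSet α t' ∩ Metric.closedBall z₂ r₂).Nonempty}
        (fun _ => (1 : ENNReal)) t) = g α := by
    intro α
    have hset : {t' : ℝ | (lineSet α t' ∩ Metric.closedBall z₁ r₁).Nonempty ∧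
        (lineSet α t' ∩ Metric.closedBall z₂ r₂).Nonempty} = Set.Icc (A α) (B α) := by
      ext t
      simp only [Set.mem_setOf_eq, line_meets_ball α t r₁ hr₁.le z₁,
        line_meets_ball α t r₂ hr₂.le z₂, Set.mem_Icc, abs_le, hA, hB, max_le_iff, le_min_iff,
        hc₁, hc₂]
      constructor
      · rintro ⟨⟨a1,a2⟩,b1,b2⟩
        exact ⟨⟨by linarith, by linarith⟩, by linarith, by linarith⟩
      · rintro ⟨⟨a1,a2⟩,b1,b2⟩
        exact ⟨⟨by linarith, by linarith⟩, by linarith, by linarith⟩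
    rw [hset, lintegral_indicator measurableSet_Icc _, setLIntegral_one,
      Measure.restrict_apply measurableSet_Icc]
    refine le_antisymm ?_ ?_
    · show volume (Set.Icc (A α) (B α) ∩ Set.Ioi 0) ≤ ENNReal.ofReal (B α - max (A α) 0)
      rw [← Real.volume_Icc]
      apply measure_mono
      intro x hx
      simp only [Set.mem_inter_iff, Set.mem_Icc, Set.mem_Ioi] at hx
      exact ⟨max_le hx.1.1 hx.2.le, hx.1.2⟩
    · show ENNReal.ofReal (B α - max (A α) 0) ≤ volume (Set.Icc (A α) (B α) ∩ Set.Ioi 0)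
      rw [← Real.volume_Ioc]
      apply measure_mono
      intro x hx
      simp only [Set.mem_Ioc] at hx
      have hx1 := max_lt_iff.mp hx.1
      exact ⟨⟨hx1.1.le, hx.2⟩, hx1.2⟩
  have hcont : Continuous fun α => B α - max (A α) 0 := by
    rw [hA, hB, hc₁, hc₂]
    fun_prop
  have hmeas : Measurable g := by
    rw [hg]; exact ENNReal.continuous_ofReal.measurable.comp hcont.measurable
  have hlm : lineMeas₂ (Metric.closedBall z₁ r₁) (Metric.closedBall z₂ r₂)
      = ∫⁻ α in Set.Ico (0:ℝ) (2*Real.pi), g α := by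
    simp only [lineMeas₂]
    exact lintegral_congr hinner
  have hsplit : (∫⁻ α in Set.Ico (0:ℝ) (2*Real.pi), g α)
      = (∫⁻ α in Set.Ico (0:ℝ) Real.pi, g α) + ∫⁻ α in Set.Ico Real.pi (2*Real.pi), g α := by
    rw [← lintegral_union measurableSet_Ico (Set.Ico_disjoint_Ico_same),
      Set.Ico_union_Ico_eq_Ico Real.pi_nonneg (by linarith [Real.pi_pos])]
  have htrans : (∫⁻ α in Set.Ico Real.pi (2*Real.pi), g α)
      = ∫⁻ α in Set.Ico (0:ℝ) Real.pi, g (α + Real.pi) := by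
    have hpre : (fun x : ℝ => x + Real.pi) ⁻¹' Set.Ico Real.pi (2*Real.pi) = Set.Ico 0 Real.pi := by
      ext x
      simp only [Set.mem_preimage, Set.mem_Ico]
      constructor <;> intro h <;> exact ⟨by linarith [h.1, h.2], by linarith [h.1, h.2]⟩
    have hmp : MeasurePreserving (fun x : ℝ => x + Real.pi) volume volume :=
      measurePreserving_add_right volume Real.pi
    have hemb : MeasurableEmbedding (fun x : ℝ => x + Real.pi) :=
      measurableEmbedding_addRight Real.pi
    rw [← hpre, MeasurePreserving.setLIntegral_comp_preimage_emb hmp hemb]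
  have hpair : ∀ α, g α + g (α + Real.pi) = ENNReal.ofReal (B α - A α) := by
    intro α
    have hA' : A (α + Real.pi) = - B α := by
      rw [show A (α + Real.pi) = max (-(c₁ α + r₁)) (-(c₂ α + r₂)) from by
          simp only [hA, hc₁, hc₂, Real.cos_add_pi, Real.sin_add_pi]
          congr 1 <;> ring,
        max_neg_neg, hB]
    have hB' : B (α + Real.pi) = - A α := by
      rw [show B (α + Real.pi) = min (-(c₁ α - r₁)) (-(c₂ α - r₂)) from by
          simp only [hB, hc₁, hc₂, Real.cos_add_pi, Real.sin_add_pi]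
          congr 1 <;> ring,
        min_neg_neg, hA]
    rw [hg]
    simp only [hA', hB']
    rw [show max (-B α) 0 = - min (B α) 0 from by rw [← neg_zero, max_neg_neg, neg_zero]]
    rcases le_total 0 (A α) with h | h
    · have t2 : ENNReal.ofReal (-A α - -(min (B α) 0)) = 0 := by
        apply ENNReal.ofReal_of_nonpos
        have : min (B α) 0 ≤ 0 := min_le_right _ _
        linarith
      rw [t2, add_zero, max_eq_left h]
    · rcases le_total 0 (B α) with h' | h'
      · rw [max_eq_right h, min_eq_right h',
          ← ENNReal.ofReal_add (by linarith : (0:ℝ) ≤ B α - 0) (by linarith : (0:ℝ) ≤ -A α - -0)]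
        congr 1
        ring
      · have t1 : ENNReal.ofReal (B α - max (A α) 0) = 0 := by
          apply ENNReal.ofReal_of_nonpos
          rw [max_eq_right h]
          linarith
        rw [t1, min_eq_left h', zero_add]
        congr 1
        ring
  have hck : ∀ α, c₂ α - c₁ α = d * k α := by
    intro α
    rw [hc₁, hc₂, hk, he₀, he₁]
    field_simp
    ring
  have hbound : ∀ α, B α - A α ≤ 2*r₂ + ε*v - 2*v*|k α| := by
    intro α
    have h1 : B α - A α ≤ (c₁ α + r₁) - (c₂ α - r₂) := by
      apply sub_le_sub (min_le_left _ _) (le_max_right _ _)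
    have h2 : B α - A α ≤ (c₂ α + r₂) - (c₁ α - r₁) := by
      apply sub_le_sub (min_le_right _ _) (le_max_left _ _)
    have hck' := hck α
    have hdk : 2*v*|k α| ≤ d * |k α| := by
      apply mul_le_mul_of_nonneg_right _ (abs_nonneg _)
      linarith
    rcases abs_cases (k α) with ⟨hk1, hk2⟩ | ⟨hk1, hk2⟩ <;> rw [hk1] at hdk ⊢ <;>
      nlinarith [h1, h2, hck', hdk]
  -- direction angle
  obtain ⟨θ, hθc, hθs⟩ : ∃ θ : ℝ, Real.cos θ = e₀ ∧ Real.sin θ = e₁ := by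
    have habs1 : ‖(⟨e₀, e₁⟩ : ℂ)‖ = 1 := by
      rw [Complex.norm_def, Complex.normSq_mk, show e₀*e₀ + e₁*e₁ = 1 by nlinarith [he]]
      exact Real.sqrt_one
    have hne : (⟨e₀, e₁⟩ : ℂ) ≠ 0 := by
      intro h0
      rw [h0] at habs1
      simp at habs1
    refine ⟨Complex.arg ⟨e₀, e₁⟩, ?_, ?_⟩
    · rw [Complex.cos_arg hne, habs1]
      simp
    · rw [Complex.sin_arg, habs1]
      simp
  have hkcos : ∀ α, k α = Real.cos (α - θ) := by
    intro α
    rw [Real.cos_sub, hθc, hθs, hk]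
    ring
  -- the absolute-cosine integral
  have habs : ∫ α in (0:ℝ)..Real.pi, |Real.cos (α - θ)| = 2 := by
    rw [intervalIntegral.integral_comp_sub_right (fun x => |Real.cos x|) θ]
    have hper : Function.Periodic (fun x => |Real.cos x|) Real.pi := fun x => by
      simp [Real.cos_add_pi]
    have hshift := hper.intervalIntegral_add_eq (0 - θ) 0
    rw [show Real.pi - θ = 0 - θ + Real.pi from by ring, hshift, zero_add]
    have hi1 : ∫ x in (0:ℝ)..(Real.pi/2), |Real.cos x| = 1 := by
      rw [intervalIntegral.integral_congr (g := Real.cos) ?_, integral_cos]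
      · simp
      · intro x hx
        rw [Set.uIcc_of_le (by positivity)] at hx
        exact abs_of_nonneg (Real.cos_nonneg_of_mem_Icc ⟨by linarith [hx.1, Real.pi_pos], hx.2⟩)
    have hi2 : ∫ x in (Real.pi/2:ℝ)..Real.pi, |Real.cos x| = 1 := by
      rw [intervalIntegral.integral_congr (g := fun x => -Real.cos x) ?_]
      · rw [intervalIntegral.integral_neg, integral_cos]
        simp
      · intro x hx
        rw [Set.uIcc_of_le (by linarith [Real.pi_pos])] at hx
        exact abs_of_nonpos (Real.cos_nonpos_of_pi_div_two_le_of_le hx.1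
          (by linarith [hx.2, Real.pi_pos]))
    rw [← intervalIntegral.integral_add_adjacent_intervals (a := (0:ℝ)) (b := Real.pi/2)
      (c := Real.pi) ((Real.continuous_cos.abs).intervalIntegrable _ _)
      ((Real.continuous_cos.abs).intervalIntegrable _ _), hi1, hi2]
    norm_num
  have hkc : Continuous k := by
    rw [hk]; fun_prop
  have hfc : Continuous fun α => 2*r₂ + ε*v - 2*v*|k α| := by
    fun_prop
  have hreal : (∫ α in Set.Ico (0:ℝ) Real.pi, (2*r₂ + ε*v - 2*v*|k α|))
      = 2*Real.pi*r₂ - (4 - ε*Real.pi)*v := by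
    rw [MeasureTheory.integral_Ico_eq_integral_Ioo, ← MeasureTheory.integral_Ioc_eq_integral_Ioo,
      ← intervalIntegral.integral_of_le Real.pi_nonneg]
    have hcongr : ∀ x ∈ Set.uIcc (0:ℝ) Real.pi,
        2*r₂ + ε*v - 2*v*|k x| = 2*r₂ + ε*v - 2*v*|Real.cos (x - θ)| := fun x _ => by
      rw [hkcos]
    have hInt : IntervalIntegrable (fun x => 2*v*|Real.cos (x - θ)|) volume 0 Real.pi := by
      apply Continuous.intervalIntegrable
      fun_prop
    rw [intervalIntegral.integral_congr hcongr,
      intervalIntegral.integral_sub (intervalIntegrable_const) hInt,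
      intervalIntegral.integral_const_mul, habs, intervalIntegral.integral_const]
    simp only [smul_eq_mul, sub_zero]
    ring
  have hfin : (∫⁻ α in Set.Ico (0:ℝ) Real.pi, ENNReal.ofReal (2*r₂ + ε*v - 2*v*|k α|))
      = ENNReal.ofReal (2*Real.pi*r₂ - (4 - ε*Real.pi)*v) := by
    rw [← hreal, ← MeasureTheory.ofReal_integral_eq_lintegral_ofReal
      (hfc.integrableOn_Icc.mono_set Set.Ico_subset_Icc_self) ?_]
    refine Filter.Eventually.of_forall fun α => ?_
    have h1 : |k α| ≤ 1 := by rw [hkcos]; exact Real.abs_cos_le_one _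
    have h2 : 2*v*|k α| ≤ 2*v := by nlinarith [abs_nonneg (k α)]
    simp only [Pi.zero_apply]
    nlinarith
  calc lineMeas₂ (Metric.closedBall z₁ r₁) (Metric.closedBall z₂ r₂)
      = ∫⁻ α in Set.Ico (0:ℝ) (2*Real.pi), g α := hlm
    _ = (∫⁻ α in Set.Ico (0:ℝ) Real.pi, g α) + ∫⁻ α in Set.Ico Real.pi (2*Real.pi), g α := hsplit
    _ = (∫⁻ α in Set.Ico (0:ℝ) Real.pi, g α) + ∫⁻ α in Set.Ico (0:ℝ) Real.pi, g (α + Real.pi) := by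
        rw [htrans]
    _ = ∫⁻ α in Set.Ico (0:ℝ) Real.pi, (g α + g (α + Real.pi)) :=
        (lintegral_add_left hmeas _).symm
    _ ≤ ∫⁻ α in Set.Ico (0:ℝ) Real.pi, ENNReal.ofReal (2*r₂ + ε*v - 2*v*|k α|) := by
        apply lintegral_mono
        intro α
        show g α + g (α + Real.pi) ≤ ENNReal.ofReal (2*r₂ + ε*v - 2*v*|k α|)
        rw [hpair α]
        exact ENNReal.ofReal_le_ofReal (hbound α)
    _ = ENNReal.ofReal (2*Real.pi*r₂ - (4 - ε*Real.pi)*v) := hfin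
end
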